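/- Let $\mu$ be a probability measure, $\kappa_\sigma \in L^1$ real(or $\mathbb{R}^d$)-valued with $\int \kappa_\sigma\, d\mu = 0$, and suppose $\psi := |\kappa_\sigma|$ satisfies $\mu(\psi > n) \le C n^{-2}$ for $n \ge 1$. Then there exist $C', \delta > 0$ such that for all $t \in \mathbb{R}^d$ with $0 < |t| < \delta$: $\left| \int e^{i t \cdot \kappa_\sigma}\, d\mu - 1 \right| \le C' |t|^2 \log(1/|t|)$. -/

import Mathlib

open MeasureTheory

namespace Stmt14Aux

noncomputable def fA (a u : ℝ) : ℝ := if a * u ≤ 1 then (a * u) ^ 2 else 3 * (a * u)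

noncomputable def bb (a : ℝ) (k : ℕ) : ℝ :=
  if a * ((k : ℝ) + 1) ≤ 1 then 3 * a ^ 2 * (k : ℝ) else if a * (k : ℝ) ≤ 1 then 6 else 3 * a

lemma bb_nonneg {a : ℝ} (ha : 0 ≤ a) (k : ℕ) : 0 ≤ bb a k := by
  unfold bb; split_ifs <;> positivity

lemma fA_mono {a u v : ℝ} (ha : 0 < a) (hu : 0 ≤ u) (huv : u ≤ v) : fA a u ≤ fA a v := by
  have h1 : a * u ≤ a * v := mul_le_mul_of_nonneg_left huv ha.le
  have h2 : 0 ≤ a * u := by positivity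
  unfold fA; split_ifs with h3 h4 h5 <;> nlinarith

lemma fA_succ_le {a : ℝ} (ha : 0 < a) (ha1 : a ≤ 1) (k : ℕ) (hk : 1 ≤ k) :
    fA a ((k : ℝ) + 1) ≤ fA a (k : ℝ) + bb a k := by
  have hk1 : (1 : ℝ) ≤ (k : ℝ) := by exact_mod_cast hk
  unfold fA bb; split_ifs with h1 h2 h3 <;> nlinarith

lemma fA_le_sum {a u : ℝ} (ha : 0 < a) (ha1 : a ≤ 1) (hu : 0 ≤ u) :
    fA a u ≤ a ^ 2 + ∑ n ∈ Finset.range (max ⌈u⌉₊ 1 - 1), bb a (n + 1) := by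
  set m := max ⌈u⌉₊ 1 with hm
  have hm1 : 1 ≤ m := le_max_right _ _
  have hum : u ≤ (m : ℝ) := le_trans (Nat.le_ceil u) (by exact_mod_cast le_max_left _ _)
  have htel := Finset.sum_range_sub (fun i => fA a ((i : ℝ) + 1)) (m - 1)
  have hm2 : ((m - 1 : ℕ) : ℝ) + 1 = (m : ℝ) := by
    have := Nat.cast_sub hm1 (R := ℝ); push_cast at this ⊢; linarith [this]
  have hfA1 : fA a ((0 : ℕ) + 1 : ℝ) = a ^ 2 := by
    simp only [fA, Nat.cast_zero, zero_add, mul_one]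
    rw [if_pos ha1]
  calc fA a u ≤ fA a (m : ℝ) := fA_mono ha hu hum
    _ = fA a (((0:ℕ) : ℝ) + 1) + ∑ i ∈ Finset.range (m - 1),
        (fA a (((i+1 : ℕ) : ℝ) + 1) - fA a (((i:ℕ) : ℝ) + 1)) := by
        rw [htel, hm2]; push_cast; ring
    _ ≤ a ^ 2 + ∑ n ∈ Finset.range (m - 1), bb a (n + 1) := by
        rw [show fA a (((0:ℕ):ℝ) + 1) = a ^ 2 from by push_cast at hfA1 ⊢; exact hfA1]
        gcongr with i hi
        have := fA_succ_le ha ha1 (i + 1) (by omega)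
        push_cast at this ⊢
        linarith

lemma exp_bound {a ψ x : ℝ} (ha : 0 ≤ a * ψ) (h : |x| ≤ a * ψ) :
    ‖Complex.exp (Complex.I * (x : ℂ)) - 1 - Complex.I * (x : ℂ)‖ ≤ fA a ψ := by
  have habs : ‖Complex.I * (x : ℂ)‖ = |x| := by
    simp [map_mul]
  have hexp1 : ‖Complex.exp (Complex.I * (x : ℂ))‖ = 1 := by
    rw [Complex.norm_exp]
    simp [Complex.mul_re]
  unfold fA
  split_ifs with h1
  · have hx1 : |x| ≤ 1 := le_trans h h1
    have := Complex.norm_exp_sub_one_sub_id_le (x := Complex.I * (x : ℂ)) (by rw [habs]; exact hx1)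
    rw [habs] at this
    calc ‖_‖ ≤ |x| ^ 2 := this
      _ ≤ (a * ψ) ^ 2 := by nlinarith [abs_nonneg x]
  · rcases le_or_gt (|x|) 1 with hx1 | hx1
    · have := Complex.norm_exp_sub_one_sub_id_le (x := Complex.I * (x : ℂ)) (by rw [habs]; exact hx1)
      rw [habs] at this
      calc ‖_‖ ≤ |x| ^ 2 := this
        _ ≤ 3 * (a * ψ) := by nlinarith [abs_nonneg x]
    · calc ‖Complex.exp (Complex.I * (x:ℂ)) - 1 - Complex.I * (x:ℂ)‖
          ≤ ‖Complex.exp (Complex.I * (x:ℂ)) - 1‖ + ‖Complex.I * (x:ℂ)‖ :=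
            (norm_sub_le _ _)
        _ ≤ (‖Complex.exp (Complex.I * (x:ℂ))‖ + ‖(1:ℂ)‖) + |x| := by
            rw [habs]; gcongr; exact norm_sub_le _ _
        _ ≤ 3 * (a * ψ) := by rw [hexp1]; simp only [norm_one]; nlinarith


set_option maxHeartbeats 1000000 in
lemma sum_bb_le {a C : ℝ} (ha : 0 < a) (hae : a < Real.exp (-1)) (hC : 0 < C) (s : Finset ℕ) :
    ∑ n ∈ s, bb a (n + 1) * (C / ((n : ℝ) + 1) ^ 2) ≤ 36 * C * a ^ 2 * Real.log (1 / a) := by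
  have he : (2 : ℝ) < Real.exp 1 := by
    have := Real.exp_one_gt_d9; linarith
  have hainv : Real.exp 1 ≤ 1 / a := by
    rw [Real.exp_neg] at hae
    rw [le_div_iff₀ ha]
    have h := mul_lt_mul_of_pos_right hae (Real.exp_pos 1)
    rw [inv_mul_cancel₀ (ne_of_gt (Real.exp_pos 1))] at h
    nlinarith
  have h2a : (2 : ℝ) < 1 / a := lt_of_lt_of_le he hainv
  have hinva : (1 : ℝ) / a * a = 1 := by field_simp
  have ha2 : a ≤ 1 / 2 := by nlinarith
  have ha1 : a ≤ 1 := by linarith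
  have hlog : 1 ≤ Real.log (1 / a) := by
    calc (1:ℝ) = Real.log (Real.exp 1) := (Real.log_exp 1).symm
      _ ≤ Real.log (1 / a) := Real.log_le_log (Real.exp_pos 1) hainv
  set M := ⌊1 / a⌋₊ with hMdef
  have hMle : (M : ℝ) ≤ 1 / a := Nat.floor_le (by positivity)
  have hMgt : 1 / a < (M : ℝ) + 1 := Nat.lt_floor_add_one _
  have hM2 : 2 ≤ M := Nat.le_floor (by exact_mod_cast h2a.le)
  set e1 : ℕ → ℝ := fun (n : ℕ) =>
    if a * ((n : ℝ) + 2) ≤ 1 then 3 * C * a ^ 2 / ((n : ℝ) + 1) else 0 with he1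
  set e2 : ℕ → ℝ := fun (n : ℕ) => if n + 1 = M then 24 * C * a ^ 2 else 0 with he2
  set e3 : ℕ → ℝ := fun (n : ℕ) =>
    if 1 < a * ((n : ℝ) + 1) then 3 * C * a / ((n : ℝ) + 1) ^ 2 else 0 with he3
  have he1nn : ∀ n, 0 ≤ e1 n := by intro n; rw [he1]; dsimp; split_ifs <;> positivity
  have he2nn : ∀ n, 0 ≤ e2 n := by intro n; rw [he2]; dsimp; split_ifs <;> positivity
  have he3nn : ∀ n, 0 ≤ e3 n := by intro n; rw [he3]; dsimp; split_ifs <;> positivity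
  have hterm : ∀ n : ℕ, bb a (n + 1) * (C / ((n : ℝ) + 1) ^ 2) ≤ e1 n + e2 n + e3 n := by
    intro n
    have hr : (0 : ℝ) < (n : ℝ) + 1 := by positivity
    have hcast : ((n + 1 : ℕ) : ℝ) = (n : ℝ) + 1 := by push_cast; ring
    by_cases hA : a * ((n : ℝ) + 2) ≤ 1
    · have hbb : bb a (n + 1) = 3 * a ^ 2 * ((n : ℝ) + 1) := by
        unfold bb; rw [hcast, if_pos (by linarith [hA] : a * ((n:ℝ) + 1 + 1) ≤ 1)]
      have hval : e1 n = 3 * C * a ^ 2 / ((n : ℝ) + 1) := by rw [he1]; exact if_pos hA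
      have heq : bb a (n + 1) * (C / ((n : ℝ) + 1) ^ 2) = 3 * C * a ^ 2 / ((n : ℝ) + 1) := by
        rw [hbb]; field_simp
      rw [heq, hval]
      linarith [he2nn n, he3nn n]
    · push_neg at hA
      by_cases hB : a * ((n : ℝ) + 1) ≤ 1
      · have hbb : bb a (n + 1) = 6 := by
          unfold bb; rw [hcast, if_neg (by push_neg; linarith), if_pos hB]
        have hMn : M = n + 1 := by
          rw [hMdef, Nat.floor_eq_iff (by positivity)]
          constructor
          · rw [hcast, le_div_iff₀ ha]; linarith
          · rw [hcast, div_lt_iff₀ ha]; linarith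
        have hval : e2 n = 24 * C * a ^ 2 := by rw [he2]; simp [hMn]
        have h2 : 1 ≤ 2 * (a * ((n : ℝ) + 1)) := by nlinarith
        have hkey : 6 * (C / ((n : ℝ) + 1) ^ 2) ≤ 24 * C * a ^ 2 := by
          rw [show 6 * (C / ((n:ℝ)+1)^2) = 6 * C / ((n:ℝ)+1)^2 from by ring,
            div_le_iff₀ (by positivity)]
          have h4 : 1 ≤ 4 * (a ^ 2 * ((n:ℝ)+1) ^ 2) := by nlinarith
          nlinarith [mul_le_mul_of_nonneg_left h4 (show (0:ℝ) ≤ 6 * C by positivity)]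
        rw [hbb]
        calc 6 * (C / ((n : ℝ) + 1) ^ 2) ≤ e2 n := by rw [hval]; exact hkey
          _ ≤ e1 n + e2 n + e3 n := by linarith [he1nn n, he3nn n]
      · push_neg at hB
        have hbb : bb a (n + 1) = 3 * a := by
          unfold bb; rw [hcast, if_neg (by push_neg; linarith), if_neg (by push_neg; linarith)]
        have hval : e3 n = 3 * C * a / ((n : ℝ) + 1) ^ 2 := by rw [he3]; exact if_pos hB
        have heq : bb a (n + 1) * (C / ((n : ℝ) + 1) ^ 2) = 3 * C * a / ((n : ℝ) + 1) ^ 2 := by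
          rw [hbb]; ring
        rw [heq]
        calc 3 * C * a / ((n:ℝ)+1)^2 = e3 n := hval.symm
          _ ≤ e1 n + e2 n + e3 n := by linarith [he1nn n, he2nn n]
  have hsum1 : ∑ n ∈ s, e1 n ≤ 3 * C * a ^ 2 * (1 + Real.log (1 / a)) := by
    have hfil : ∑ n ∈ s, e1 n
        = ∑ n ∈ s.filter (fun (n : ℕ) => a * ((n : ℝ) + 2) ≤ 1),
            3 * C * a ^ 2 / ((n : ℝ) + 1) := by
      rw [he1, Finset.sum_filter]
    rw [hfil]
    have hsub : s.filter (fun (n : ℕ) => a * ((n : ℝ) + 2) ≤ 1) ⊆ Finset.range (M - 1) := by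
      intro n hn
      rw [Finset.mem_filter] at hn
      have h1 : ((n + 2 : ℕ) : ℝ) ≤ 1 / a := by
        push_cast; rw [le_div_iff₀ ha]; linarith [hn.2]
      have h2 : n + 2 ≤ M := Nat.le_floor h1
      rw [Finset.mem_range]; omega
    have hharm : ((harmonic (M - 1) : ℚ) : ℝ) = ∑ n ∈ Finset.range (M - 1), ((n : ℝ) + 1)⁻¹ := by
      unfold harmonic; push_cast; rfl
    have hMcast : ((M - 1 : ℕ) : ℝ) ≤ 1 / a := by
      have h1 : ((M - 1 : ℕ) : ℝ) ≤ (M : ℝ) := by exact_mod_cast Nat.sub_le M 1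
      linarith
    have hMpos : (0 : ℝ) < ((M - 1 : ℕ) : ℝ) := by
      exact_mod_cast Nat.cast_pos.mpr (show 0 < M - 1 by omega)
    calc ∑ n ∈ s.filter (fun (n : ℕ) => a * ((n : ℝ) + 2) ≤ 1), 3 * C * a ^ 2 / ((n : ℝ) + 1)
        ≤ ∑ n ∈ Finset.range (M - 1), 3 * C * a ^ 2 / ((n : ℝ) + 1) :=
          Finset.sum_le_sum_of_subset_of_nonneg hsub (fun i _ _ => by positivity)
      _ = 3 * C * a ^ 2 * ((harmonic (M - 1) : ℚ) : ℝ) := by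
          rw [hharm, Finset.mul_sum]
          exact Finset.sum_congr rfl fun i _ => div_eq_mul_inv _ _
      _ ≤ 3 * C * a ^ 2 * (1 + Real.log ((M - 1 : ℕ) : ℝ)) := by
          refine mul_le_mul_of_nonneg_left ?_ (by positivity)
          exact_mod_cast harmonic_le_one_add_log (M - 1)
      _ ≤ 3 * C * a ^ 2 * (1 + Real.log (1 / a)) := by
          refine mul_le_mul_of_nonneg_left (add_le_add_right ?_ 1) (by positivity)
          exact Real.log_le_log hMpos hMcast
  have hsum2 : ∑ n ∈ s, e2 n ≤ 24 * C * a ^ 2 := by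
    have heq : ∀ n, e2 n = if n = M - 1 then 24 * C * a ^ 2 else 0 := by
      intro n
      rw [he2]; dsimp only
      by_cases h : n + 1 = M
      · rw [if_pos h, if_pos (by omega)]
      · rw [if_neg h, if_neg (by omega)]
    rw [Finset.sum_congr rfl (fun n _ => heq n), Finset.sum_ite_eq' s (M - 1)]
    split_ifs
    · exact le_rfl
    · positivity
  have hsum3 : ∑ n ∈ s, e3 n ≤ 6 * C * a ^ 2 := by
    have hfil : ∑ n ∈ s, e3 n
        = ∑ n ∈ s.filter (fun (n : ℕ) => 1 < a * ((n : ℝ) + 1)),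
            3 * C * a / ((n : ℝ) + 1) ^ 2 := by
      rw [he3, Finset.sum_filter]
    set t := s.filter (fun (n : ℕ) => 1 < a * ((n : ℝ) + 1)) with ht
    set K := s.sup id + 2 with hK
    have himg : ∑ n ∈ t, 3 * C * a / ((n : ℝ) + 1) ^ 2
        = ∑ k ∈ t.image (fun (n : ℕ) => n + 1), 3 * C * a / (k : ℝ) ^ 2 := by
      rw [Finset.sum_image (by intro x _ y _ h; simp only at h; omega)]
      refine Finset.sum_congr rfl fun n _ => ?_
      push_cast; ring
    have hsub : t.image (fun (n : ℕ) => n + 1) ⊆ Finset.Ioo M K := by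
      intro k hk
      rw [Finset.mem_image] at hk
      obtain ⟨n, hn, rfl⟩ := hk
      rw [ht, Finset.mem_filter] at hn
      have h1 : (M : ℝ) < ((n + 1 : ℕ) : ℝ) := by
        push_cast
        calc (M : ℝ) ≤ 1 / a := hMle
          _ < (n : ℝ) + 1 := by rw [div_lt_iff₀ ha]; linarith [hn.2]
      have h2 : M < n + 1 := by exact_mod_cast h1
      have h3 : n ≤ s.sup id := Finset.le_sup (f := id) hn.1
      rw [Finset.mem_Ioo]; omega
    have h1 : 1 ≤ a * ((M : ℝ) + 1) := by
      have hq := mul_lt_mul_of_pos_left hMgt ha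
      rw [show a * (1 / a) = 1 from by field_simp] at hq
      linarith
    have h2 : 2 / ((M : ℝ) + 1) ≤ 2 * a := by
      rw [div_le_iff₀ (by positivity)]
      nlinarith
    calc ∑ n ∈ s, e3 n = ∑ k ∈ t.image (fun (n : ℕ) => n + 1), 3 * C * a / (k : ℝ) ^ 2 := by
          rw [hfil, himg]
      _ ≤ ∑ k ∈ Finset.Ioo M K, 3 * C * a / (k : ℝ) ^ 2 := by
          apply Finset.sum_le_sum_of_subset_of_nonneg hsub
          intro i _ _
          positivity
      _ = 3 * C * a * ∑ k ∈ Finset.Ioo M K, ((k : ℝ) ^ 2)⁻¹ := by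
          rw [Finset.mul_sum]
          exact Finset.sum_congr rfl fun i _ => div_eq_mul_inv _ _
      _ ≤ 3 * C * a * (2 / ((M : ℝ) + 1)) := by
          refine mul_le_mul_of_nonneg_left ?_ (by positivity)
          have hq := sum_Ioo_inv_sq_le (α := ℝ) M K
          push_cast at hq ⊢
          exact hq
      _ ≤ 6 * C * a ^ 2 := by
          have hz := mul_le_mul_of_nonneg_left h2 (show (0:ℝ) ≤ 3 * C * a by positivity)
          nlinarith [hz]
  calc ∑ n ∈ s, bb a (n + 1) * (C / ((n : ℝ) + 1) ^ 2)
      ≤ ∑ n ∈ s, (e1 n + e2 n + e3 n) := Finset.sum_le_sum fun n _ => hterm n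
    _ = ∑ n ∈ s, e1 n + ∑ n ∈ s, e2 n + ∑ n ∈ s, e3 n := by
        rw [Finset.sum_add_distrib, Finset.sum_add_distrib]
    _ ≤ 3 * C * a ^ 2 * (1 + Real.log (1 / a)) + 24 * C * a ^ 2 + 6 * C * a ^ 2 := by
        linarith
    _ ≤ 36 * C * a ^ 2 * Real.log (1 / a) := by
        nlinarith [mul_nonneg (mul_nonneg hC.le (sq_nonneg a)) (sub_nonneg.mpr hlog)]

end Stmt14Aux

open Stmt14Aux Complex

set_option maxHeartbeats 1000000 in
/-- Proposition 5.9(b): if `κ_σ` is mean-zero and `ψ = |κ_σ|` has tails `μ(ψ > n) ≤ C n⁻²`,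
then `|∫ e^{it·κ_σ} dμ - 1| ≤ C' |t|² log(1/|t|)` for small `t ≠ 0`. -/
theorem stmt_14 {Y : Type*} [MeasurableSpace Y] (μ : Measure Y) [IsProbabilityMeasure μ]
    (d : ℕ) (hd : 1 ≤ d) (κ : Y → EuclideanSpace ℝ (Fin d))
    (hκint : Integrable κ μ) (hκmean : ∫ y, κ y ∂μ = 0)
    (C : ℝ) (hC : 0 < C)
    (htail : ∀ n : ℕ, 1 ≤ n → μ {y | (n : ℝ) < ‖κ y‖} ≤ ENNReal.ofReal (C / (n : ℝ) ^ 2)) :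
    ∃ C' > 0, ∃ δ > 0, ∀ t : EuclideanSpace ℝ (Fin d), 0 < ‖t‖ → ‖t‖ < δ →
      ‖(∫ y, Complex.exp (Complex.I * ((inner ℝ t (κ y) : ℝ) : ℂ)) ∂μ) - 1‖ ≤
        C' * ‖t‖ ^ 2 * Real.log (1 / ‖t‖) := by
  obtain ⟨g, hgsm, hκg⟩ := hκint.aestronglyMeasurable
  have hg : Measurable g := hgsm.measurable
  have hgint : Integrable g μ := hκint.congr hκg
  have hgmean : ∫ y, g y ∂μ = 0 := by rw [← integral_congr_ae hκg]; exact hκmean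
  refine ⟨1 + 36 * C, by positivity, Real.exp (-1), Real.exp_pos _, ?_⟩
  intro t h0 hlt
  set a := ‖t‖ with hadef
  have he2 : (2 : ℝ) < Real.exp 1 := by have := Real.exp_one_gt_d9; linarith
  have hainv : Real.exp 1 ≤ 1 / a := by
    rw [Real.exp_neg] at hlt
    rw [le_div_iff₀ h0]
    have h := mul_lt_mul_of_pos_right hlt (Real.exp_pos 1)
    rw [inv_mul_cancel₀ (ne_of_gt (Real.exp_pos 1))] at h
    nlinarith
  have hinva : (1 : ℝ) / a * a = 1 := by field_simp
  have h2a : (2 : ℝ) < 1 / a := lt_of_lt_of_le he2 hainv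
  have ha1 : a ≤ 1 := by nlinarith
  have hlog1 : 1 ≤ Real.log (1 / a) := by
    calc (1:ℝ) = Real.log (Real.exp 1) := (Real.log_exp 1).symm
      _ ≤ Real.log (1 / a) := Real.log_le_log (Real.exp_pos 1) hainv
  -- the inner-product function
  have hxmeas : Measurable fun y => (inner ℝ t (g y) : ℝ) := by
    have hc : Continuous fun v : EuclideanSpace ℝ (Fin d) => (inner ℝ t v : ℝ) :=
      continuous_const.inner continuous_id
    exact hc.measurable.comp hg
  have hxint : Integrable (fun y => (inner ℝ t (g y) : ℝ)) μ := by
    simpa using (innerSL ℝ t).integrable_comp hgint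
  have hxmean : ∫ y, (inner ℝ t (g y) : ℝ) ∂μ = 0 := by
    have h := (innerSL ℝ t).integral_comp_comm hgint
    rw [hgmean] at h
    simpa using h
  -- the exponential function
  have hEmeas : Measurable fun y => Complex.exp (Complex.I * ((inner ℝ t (g y) : ℝ) : ℂ)) := by
    exact Complex.measurable_exp.comp ((Complex.measurable_ofReal.comp hxmeas).const_mul I)
  have hEint : Integrable (fun y => Complex.exp (Complex.I * ((inner ℝ t (g y) : ℝ) : ℂ))) μ := by
    refine Integrable.mono' (integrable_const (1:ℝ)) hEmeas.aestronglyMeasurable ?_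
    refine ae_of_all _ fun y => ?_
    rw [Complex.norm_exp]
    simp [Complex.mul_re]
  have hIxint : Integrable (fun y => Complex.I * ((inner ℝ t (g y) : ℝ) : ℂ)) μ :=
    hxint.ofReal.const_mul I
  have hIx : ∫ y, Complex.I * ((inner ℝ t (g y) : ℝ) : ℂ) ∂μ = 0 := by
    rw [integral_const_mul]
    have hor : ∫ y, ((inner ℝ t (g y) : ℝ) : ℂ) ∂μ = ((∫ y, (inner ℝ t (g y) : ℝ) ∂μ : ℝ) : ℂ) :=
      integral_ofReal
    rw [hor, hxmean]
    simp
  have hsplit : ∫ y, (Complex.exp (Complex.I * ((inner ℝ t (g y) : ℝ) : ℂ)) - 1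
        - Complex.I * ((inner ℝ t (g y) : ℝ) : ℂ)) ∂μ
      = (∫ y, Complex.exp (Complex.I * ((inner ℝ t (g y) : ℝ) : ℂ)) ∂μ) - 1 := by
    have h1 : ∫ y, (Complex.exp (Complex.I * ((inner ℝ t (g y) : ℝ) : ℂ)) - 1
          - Complex.I * ((inner ℝ t (g y) : ℝ) : ℂ)) ∂μ
        = (∫ y, (Complex.exp (Complex.I * ((inner ℝ t (g y) : ℝ) : ℂ)) - 1) ∂μ)
          - ∫ y, Complex.I * ((inner ℝ t (g y) : ℝ) : ℂ) ∂μ :=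
      integral_sub (hEint.sub (integrable_const 1)) hIxint
    have h2 : ∫ y, (Complex.exp (Complex.I * ((inner ℝ t (g y) : ℝ) : ℂ)) - 1) ∂μ
        = (∫ y, Complex.exp (Complex.I * ((inner ℝ t (g y) : ℝ) : ℂ)) ∂μ) - ∫ _, (1:ℂ) ∂μ :=
      integral_sub hEint (integrable_const 1)
    rw [h1, h2, hIx, integral_const]
    simp
  have hEeq : ∫ y, Complex.exp (Complex.I * ((inner ℝ t (κ y) : ℝ) : ℂ)) ∂μ
      = ∫ y, Complex.exp (Complex.I * ((inner ℝ t (g y) : ℝ) : ℂ)) ∂μ := by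
    refine integral_congr_ae (hκg.mono fun y hy => ?_)
    simp only [hy]
  -- measurable tail sets
  have hSmeas : ∀ n : ℕ, MeasurableSet {y | ((n : ℝ) + 1) < ‖g y‖} := fun n =>
    measurableSet_lt measurable_const hg.norm
  have hμS : ∀ n : ℕ, μ {y | ((n : ℝ) + 1) < ‖g y‖} ≤ ENNReal.ofReal (C / ((n : ℝ) + 1) ^ 2) := by
    intro n
    have hae : ({y | ((n : ℝ) + 1) < ‖g y‖} : Set Y) =ᵐ[μ]
        ({y | ((n : ℝ) + 1) < ‖κ y‖} : Set Y) := by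
      filter_upwards [hκg] with y hy
      show (((n:ℝ) + 1 < ‖g y‖) = ((n:ℝ) + 1 < ‖κ y‖))
      rw [hy]
    rw [measure_congr hae]
    have h5 := htail (n + 1) (by omega)
    push_cast at h5
    exact h5
  -- pointwise bound
  have hGbound : ∀ y, ENNReal.ofReal ‖Complex.exp (Complex.I * ((inner ℝ t (g y) : ℝ) : ℂ)) - 1
        - Complex.I * ((inner ℝ t (g y) : ℝ) : ℂ)‖
      ≤ ENNReal.ofReal (a ^ 2) + ∑' n : ℕ,
          ({y | ((n : ℝ) + 1) < ‖g y‖}.indicator (fun _ => ENNReal.ofReal (bb a (n + 1))) y) := by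
    intro y
    set u := ‖g y‖ with hu
    have hu0 : 0 ≤ u := norm_nonneg _
    have hstep1 : ‖Complex.exp (Complex.I * ((inner ℝ t (g y) : ℝ) : ℂ)) - 1
        - Complex.I * ((inner ℝ t (g y) : ℝ) : ℂ)‖ ≤ fA a u := by
      refine exp_bound (a := a) (ψ := u) (x := (inner ℝ t (g y) : ℝ))
        (by positivity) ?_
      rw [hu, hadef]
      exact abs_real_inner_le_norm t (g y)
    have hstep2 : fA a u ≤ a ^ 2 + ∑ n ∈ Finset.range (max ⌈u⌉₊ 1 - 1), bb a (n + 1) :=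
      fA_le_sum h0 ha1 hu0
    calc ENNReal.ofReal ‖Complex.exp (Complex.I * ((inner ℝ t (g y) : ℝ) : ℂ)) - 1
          - Complex.I * ((inner ℝ t (g y) : ℝ) : ℂ)‖
        ≤ ENNReal.ofReal (a ^ 2 + ∑ n ∈ Finset.range (max ⌈u⌉₊ 1 - 1),
          bb a (n + 1)) := ENNReal.ofReal_le_ofReal (le_trans hstep1 hstep2)
      _ = ENNReal.ofReal (a ^ 2) + ENNReal.ofReal (∑ n ∈ Finset.range (max ⌈u⌉₊ 1 - 1),
          bb a (n + 1)) := ENNReal.ofReal_add (by positivity)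
            (Finset.sum_nonneg fun n _ => bb_nonneg h0.le _)
      _ = ENNReal.ofReal (a ^ 2) + ∑ n ∈ Finset.range (max ⌈u⌉₊ 1 - 1),
          ENNReal.ofReal (bb a (n + 1)) := by
            rw [ENNReal.ofReal_sum_of_nonneg fun n _ => bb_nonneg h0.le _]
      _ = ENNReal.ofReal (a ^ 2) + ∑ n ∈ Finset.range (max ⌈u⌉₊ 1 - 1),
          ({y | ((n : ℝ) + 1) < ‖g y‖}.indicator (fun _ => ENNReal.ofReal (bb a (n + 1))) y) := by
            congr 1
            refine Finset.sum_congr rfl fun n hn => ?_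
            rw [Finset.mem_range] at hn
            have hym : y ∈ {y | ((n : ℝ) + 1) < ‖g y‖} := by
              have h1 : n + 1 < max ⌈u⌉₊ 1 := by omega
              have h2 : n + 1 < ⌈u⌉₊ := by
                rcases Nat.lt_or_ge (n+1) ⌈u⌉₊ with h | h
                · exact h
                · exfalso; omega
              have h3 : ((n + 1 : ℕ) : ℝ) < u := Nat.lt_ceil.mp h2
              show ((n : ℝ) + 1) < ‖g y‖
              push_cast at h3
              exact h3
            rw [Set.indicator_of_mem hym]
      _ ≤ _ := by
            gcongr
            exact ENNReal.sum_le_tsum _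
  -- the main lintegral estimate
  have hlint : ∫⁻ y, ENNReal.ofReal ‖Complex.exp (Complex.I * ((inner ℝ t (g y) : ℝ) : ℂ)) - 1
        - Complex.I * ((inner ℝ t (g y) : ℝ) : ℂ)‖ ∂μ
      ≤ ENNReal.ofReal ((1 + 36 * C) * a ^ 2 * Real.log (1 / a)) := by
    calc ∫⁻ y, ENNReal.ofReal ‖Complex.exp (Complex.I * ((inner ℝ t (g y) : ℝ) : ℂ)) - 1
          - Complex.I * ((inner ℝ t (g y) : ℝ) : ℂ)‖ ∂μ
        ≤ ∫⁻ y, (ENNReal.ofReal (a ^ 2) + ∑' n : ℕ,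
            ({y | ((n : ℝ) + 1) < ‖g y‖}.indicator
              (fun _ => ENNReal.ofReal (bb a (n + 1))) y)) ∂μ := lintegral_mono hGbound
      _ = ENNReal.ofReal (a ^ 2) + ∑' n : ℕ,
            ENNReal.ofReal (bb a (n + 1)) * μ {y | ((n : ℝ) + 1) < ‖g y‖} := by
          rw [lintegral_add_left measurable_const, lintegral_const, measure_univ, mul_one,
            lintegral_tsum fun n => (measurable_const.indicator (hSmeas n)).aemeasurable]
          congr 1
          exact tsum_congr fun n => lintegral_indicator_const (hSmeas n) _
      _ ≤ ENNReal.ofReal (a ^ 2) + ENNReal.ofReal (36 * C * a ^ 2 * Real.log (1 / a)) := by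
          gcongr
          calc ∑' n : ℕ, ENNReal.ofReal (bb a (n + 1)) * μ {y | ((n : ℝ) + 1) < ‖g y‖}
              ≤ ∑' n : ℕ, ENNReal.ofReal (bb a (n + 1) * (C / ((n : ℝ) + 1) ^ 2)) := by
                refine ENNReal.tsum_le_tsum fun n => ?_
                calc ENNReal.ofReal (bb a (n + 1)) * μ {y | ((n : ℝ) + 1) < ‖g y‖}
                    ≤ ENNReal.ofReal (bb a (n + 1)) * ENNReal.ofReal (C / ((n : ℝ) + 1) ^ 2) :=
                      mul_le_mul_right (hμS n) _
                  _ = ENNReal.ofReal (bb a (n + 1) * (C / ((n : ℝ) + 1) ^ 2)) :=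
                      (ENNReal.ofReal_mul (bb_nonneg h0.le _)).symm
            _ ≤ ENNReal.ofReal (36 * C * a ^ 2 * Real.log (1 / a)) := by
                rw [ENNReal.tsum_eq_iSup_sum]
                refine iSup_le fun s => ?_
                rw [← ENNReal.ofReal_sum_of_nonneg fun n _ =>
                  mul_nonneg (bb_nonneg h0.le _) (by positivity)]
                exact ENNReal.ofReal_le_ofReal (sum_bb_le h0 hlt hC s)
      _ ≤ ENNReal.ofReal ((1 + 36 * C) * a ^ 2 * Real.log (1 / a)) := by
          rw [← ENNReal.ofReal_add (by positivity) (by positivity)]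
          apply ENNReal.ofReal_le_ofReal
          nlinarith [sq_nonneg a, mul_nonneg (sq_nonneg a) (sub_nonneg.mpr hlog1)]
  rw [hEeq, ← hsplit]
  refine le_trans (norm_integral_le_lintegral_norm _) ?_
  refine ENNReal.toReal_le_of_le_ofReal ?_ hlint
  have : (0:ℝ) ≤ Real.log (1 / a) := by linarith
  positivity
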